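/- Let T be a faithfully flat H-Galois object over k. Then for every h ∈ H one has h⁽¹⁾ ⊗ θ(h⁽²⁾) = S(h)⁽²⁾ ⊗ S(h)⁽¹⁾ in T ⊗ T; that is, (id_T ⊗ θ)(γ(h)) = τ(γ(S(h))), where τ : T ⊗ T → T ⊗ T is the flip of the two tensor factors. -/

import Mathlib

set_option maxHeartbeats 1000000
set_option synthInstance.maxHeartbeats 200000

open TensorProduct LinearMap HopfAlgebra

section Conv

variable {k : Type*} [CommRing k] {C : Type*} [AddCommMonoid C] [Module k C] [Coalgebra k C]
  {B : Type*} [Ring B] [Algebra k B]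

noncomputable def myconv (f g : C →ₗ[k] B) : C →ₗ[k] B :=
  LinearMap.mul' k B ∘ₗ TensorProduct.map f g ∘ₗ Coalgebra.comul

lemma myconv_apply (f g : C →ₗ[k] B) (a : C) :
    myconv f g a = LinearMap.mul' k B (TensorProduct.map f g (Coalgebra.comul a)) := rfl

lemma myconv_unit_left (f : C →ₗ[k] B) :
    myconv ((Algebra.linearMap k B) ∘ₗ Coalgebra.counit) f = f := by
  ext a
  have h1 : ∀ z : C ⊗[k] C,
      TensorProduct.map ((Algebra.linearMap k B) ∘ₗ Coalgebra.counit) f z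
        = TensorProduct.map (Algebra.linearMap k B) f
            ((Coalgebra.counit (R := k)).rTensor C z) := by
    intro z
    induction z using TensorProduct.induction_on with
    | zero => simp
    | tmul x y => simp
    | add u v hu hv => simp only [map_add, hu, hv]
  rw [myconv_apply, h1, Coalgebra.rTensor_counit_comul]
  simp

lemma myconv_unit_right (f : C →ₗ[k] B) :
    myconv f ((Algebra.linearMap k B) ∘ₗ Coalgebra.counit) = f := by
  ext a
  have h1 : ∀ z : C ⊗[k] C,
      TensorProduct.map f ((Algebra.linearMap k B) ∘ₗ Coalgebra.counit) z
        = TensorProduct.map f (Algebra.linearMap k B)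
            ((Coalgebra.counit (R := k)).lTensor C z) := by
    intro z
    induction z using TensorProduct.induction_on with
    | zero => simp
    | tmul x y => simp
    | add u v hu hv => simp only [map_add, hu, hv]
  rw [myconv_apply, h1, Coalgebra.lTensor_counit_comul]
  simp

lemma myconv_assoc (f g h : C →ₗ[k] B) :
    myconv (myconv f g) h = myconv f (myconv g h) := by
  ext a
  have A' : ∀ (w : C ⊗[k] C) (v : C),
      (LinearMap.mul' k B (TensorProduct.map f g w)) * h v
        = LinearMap.mul' k B (TensorProduct.map f (LinearMap.mul' k B ∘ₗ TensorProduct.map g h)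
            (TensorProduct.assoc k C C C (w ⊗ₜ[k] v))) := by
    intro w v
    induction w using TensorProduct.induction_on with
    | zero => simp
    | tmul x y => simp [mul_assoc]
    | add u u' hu hu' => simp only [map_add, add_mul, add_tmul, hu, hu']
  have A : ∀ z : C ⊗[k] C,
      LinearMap.mul' k B (TensorProduct.map (myconv f g) h z)
        = LinearMap.mul' k B (TensorProduct.map f (LinearMap.mul' k B ∘ₗ TensorProduct.map g h)
            (TensorProduct.assoc k C C C ((Coalgebra.comul (R := k)).rTensor C z))) := by
    intro z
    induction z using TensorProduct.induction_on with
    | zero => simp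
    | tmul x y => simpa [myconv_apply] using A' (Coalgebra.comul x) y
    | add u v hu hv => simp only [map_add, hu, hv]
  have Bc : ∀ z : C ⊗[k] C,
      LinearMap.mul' k B (TensorProduct.map f (myconv g h) z)
        = LinearMap.mul' k B (TensorProduct.map f (LinearMap.mul' k B ∘ₗ TensorProduct.map g h)
            ((Coalgebra.comul (R := k)).lTensor C z)) := by
    intro z
    induction z using TensorProduct.induction_on with
    | zero => simp
    | tmul x y => simp [myconv_apply]
    | add u v hu hv => simp only [map_add, hu, hv]
  rw [myconv_apply, myconv_apply, A, Coalgebra.coassoc_apply, Bc]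

end Conv

section Aux

variable (k T : Type*) [CommRing k] [Ring T] [Algebra k T]

/-- The "reversed multiplication" map `(x ⊗ y) ⊗ (c ⊗ d) ↦ (c*x) ⊗ (y*d)`. -/
noncomputable def Pmap : (T ⊗[k] T) ⊗[k] (T ⊗[k] T) →ₗ[k] T ⊗[k] T :=
  (TensorProduct.congr (MulOpposite.opLinearEquiv k : T ≃ₗ[k] Tᵐᵒᵖ)
      (LinearEquiv.refl k T)).symm.toLinearMap
    ∘ₗ LinearMap.mul' k (Tᵐᵒᵖ ⊗[k] T)
    ∘ₗ TensorProduct.map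
        (TensorProduct.congr (MulOpposite.opLinearEquiv k : T ≃ₗ[k] Tᵐᵒᵖ)
          (LinearEquiv.refl k T)).toLinearMap
        (TensorProduct.congr (MulOpposite.opLinearEquiv k : T ≃ₗ[k] Tᵐᵒᵖ)
          (LinearEquiv.refl k T)).toLinearMap

variable {k T}

@[simp] lemma Pmap_tmul (x y c d : T) :
    Pmap k T ((x ⊗ₜ[k] y) ⊗ₜ[k] (c ⊗ₜ[k] d)) = (c * x) ⊗ₜ[k] (y * d) := by
  simp [Pmap, TensorProduct.congr_tmul, Algebra.TensorProduct.tmul_mul_tmul,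
    ← MulOpposite.op_mul]

/-- The composite `Φθ` with `θ = Φθ ∘ ρ`. -/
noncomputable def Phi {H : Type*} [Ring H] [Algebra k H]
    (γ : H →ₗ[k] T ⊗[k] T) (S' : H →ₗ[k] H) : T ⊗[k] H →ₗ[k] T :=
  LinearMap.mul' k T
    ∘ₗ (TensorProduct.comm k T T).toLinearMap
    ∘ₗ LinearMap.lTensor T (LinearMap.mul' k T)
    ∘ₗ (TensorProduct.assoc k T T T).toLinearMap
    ∘ₗ LinearMap.rTensor T (TensorProduct.comm k T T).toLinearMap
    ∘ₗ (TensorProduct.assoc k T T T).symm.toLinearMap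
    ∘ₗ LinearMap.lTensor T (γ ∘ₗ S')


/-- The composite `Ξ` with `Φθ = Ξ ∘ (id ⊗ γ∘S)`. -/
noncomputable def Xi (k T : Type*) [CommRing k] [Ring T] [Algebra k T] :
    T ⊗[k] (T ⊗[k] T) →ₗ[k] T :=
  LinearMap.mul' k T
    ∘ₗ (TensorProduct.comm k T T).toLinearMap
    ∘ₗ LinearMap.lTensor T (LinearMap.mul' k T)
    ∘ₗ (TensorProduct.assoc k T T T).toLinearMap
    ∘ₗ LinearMap.rTensor T (TensorProduct.comm k T T).toLinearMap
    ∘ₗ (TensorProduct.assoc k T T T).symm.toLinearMap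

lemma Phi_tmul {H : Type*} [Ring H] [Algebra k H]
    (γ : H →ₗ[k] T ⊗[k] T) (S' : H →ₗ[k] H) (y : T) (a : H) :
    Phi γ S' (y ⊗ₜ[k] a) = Xi k T (y ⊗ₜ[k] γ (S' a)) := by
  simp [Phi, Xi, LinearMap.lTensor_tmul]

lemma Xi_tmul (y c d : T) : Xi k T (y ⊗ₜ[k] (c ⊗ₜ[k] d)) = (y * d) * c := by
  simp [Xi, TensorProduct.assoc_symm_tmul]

end Aux

/-- For a faithfully flat `H`-Galois object `T` and every `h ∈ H`,
`h⁽¹⁾ ⊗ θ(h⁽²⁾) = S(h)⁽²⁾ ⊗ S(h)⁽¹⁾` in `T ⊗ T`; that is,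
`(id_T ⊗ θ)(γ(h)) = τ(γ(S(h)))` with `τ` the flip. -/
theorem stmt_7
    {k : Type*} [CommRing k] {H : Type*} [Ring H] [HopfAlgebra k H]
    {T : Type*} [Ring T] [Algebra k T]
    -- `ρ` is an algebra map making `T` a right `H`-comodule algebra:
    (ρ : T →ₐ[k] T ⊗[k] H)
    (hcoassoc : ∀ x : T,
      (TensorProduct.map ρ.toLinearMap LinearMap.id) (ρ x)
        = (TensorProduct.assoc k T H H).symm
            ((TensorProduct.map LinearMap.id Coalgebra.comul) (ρ x)))
    (hcounit : ∀ x : T,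
      (TensorProduct.rid k T)
        ((TensorProduct.map LinearMap.id Coalgebra.counit) (ρ x)) = x)
    -- the coinvariants are exactly `k·1`:
    (hcoinv : {t : T | ρ t = t ⊗ₜ[k] (1 : H)} = Set.range (algebraMap k T))
    -- `T` is faithfully flat over `k`:
    (hflat : Module.FaithfullyFlat k T)
    -- the canonical (Galois) map `β(x ⊗ y) = x·y₍₀₎ ⊗ y₍₁₎`, assumed bijective:
    (β : T ⊗[k] T →ₗ[k] T ⊗[k] H)
    (hβ : ∀ x y : T, β (x ⊗ₜ[k] y) = (x ⊗ₜ[k] (1 : H)) * ρ y)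
    (hβbij : Function.Bijective β)
    -- `γ(h) = β⁻¹(1 ⊗ h) = h⁽¹⁾ ⊗ h⁽²⁾`:
    (γ : H →ₗ[k] T ⊗[k] T)
    (hγ : ∀ h : H, β (γ h) = (1 : T) ⊗ₜ[k] h)
    -- `θ(x) = (x₍₀₎·S(x₍₁₎)⁽²⁾)·S(x₍₁₎)⁽¹⁾`:
    (θ : T →ₗ[k] T)
    (hθ : θ = LinearMap.mul' k T
        ∘ₗ (TensorProduct.comm k T T).toLinearMap
        ∘ₗ LinearMap.lTensor T (LinearMap.mul' k T)
        ∘ₗ (TensorProduct.assoc k T T T).toLinearMap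
        ∘ₗ LinearMap.rTensor T (TensorProduct.comm k T T).toLinearMap
        ∘ₗ (TensorProduct.assoc k T T T).symm.toLinearMap
        ∘ₗ LinearMap.lTensor T (γ ∘ₗ HopfAlgebra.antipode (R := k))
        ∘ₗ ρ.toLinearMap)
    :
    ∀ h : H,
      (LinearMap.lTensor T θ) (γ h)
        = (TensorProduct.comm k T T) (γ (HopfAlgebra.antipode (R := k) h)) := by
  have βinj : Function.Injective β := hβbij.injective
  -- θ = Phi ∘ ρ
  have hθ' : θ = Phi γ (HopfAlgebra.antipode (R := k)) ∘ₗ ρ.toLinearMap := by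
    rw [hθ]; ext x; rfl
  -- β is left T-linear
  have h3 : ∀ (x : T) (u : T ⊗[k] T),
      β ((x ⊗ₜ[k] (1 : T)) * u) = (x ⊗ₜ[k] (1 : H)) * β u := by
    intro x u
    induction u using TensorProduct.induction_on with
    | zero => simp only [tmul_zero, zero_tmul, map_zero, mul_zero, zero_mul, smul_zero]
    | tmul a b =>
        rw [Algebra.TensorProduct.tmul_mul_tmul, one_mul, hβ, hβ, ← mul_assoc,
          Algebra.TensorProduct.tmul_mul_tmul, mul_one]
    | add u v hu hv => rw [mul_add, map_add, hu, hv, map_add, mul_add]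
  -- anti-multiplicativity of γ
  have h4a : ∀ (u : T ⊗[k] T) (x' y' : T),
      β (Pmap k T (u ⊗ₜ[k] (x' ⊗ₜ[k] y'))) = (x' ⊗ₜ[k] (1 : H)) * β u * ρ y' := by
    intro u x' y'
    induction u using TensorProduct.induction_on with
    | zero => simp only [tmul_zero, zero_tmul, map_zero, mul_zero, zero_mul, smul_zero]
    | tmul x y =>
        rw [Pmap_tmul, hβ, map_mul, hβ,
          show ((x' * x) ⊗ₜ[k] (1 : H)) = (x' ⊗ₜ[k] (1 : H)) * (x ⊗ₜ[k] (1 : H)) by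
            rw [Algebra.TensorProduct.tmul_mul_tmul, mul_one]]
        simp only [mul_assoc]
    | add u v hu hv =>
        simp only [add_tmul, map_add, hu, hv, mul_add, add_mul]
  have h4b : ∀ (g : H) (v : T ⊗[k] T),
      β (Pmap k T (γ g ⊗ₜ[k] v)) = ((1 : T) ⊗ₜ[k] g) * β v := by
    intro g v
    induction v using TensorProduct.induction_on with
    | zero => simp only [tmul_zero, zero_tmul, map_zero, mul_zero, zero_mul, smul_zero]
    | tmul x' y' =>
        rw [h4a, hγ, hβ,
          show (x' ⊗ₜ[k] (1 : H)) * ((1 : T) ⊗ₜ[k] g) = ((1 : T) ⊗ₜ[k] g) * (x' ⊗ₜ[k] (1 : H)) by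
            rw [Algebra.TensorProduct.tmul_mul_tmul, Algebra.TensorProduct.tmul_mul_tmul,
              mul_one, one_mul, mul_one, one_mul]]
        simp only [mul_assoc]
    | add u v hu hv =>
        simp only [tmul_add, map_add, hu, hv, mul_add]
  have h4 : ∀ (g h' : H), γ (g * h') = Pmap k T (γ g ⊗ₜ[k] γ h') := by
    intro g h'
    apply βinj
    rw [hγ, h4b, hγ, Algebra.TensorProduct.tmul_mul_tmul, one_mul]
  have hγ1 : γ 1 = (1 : T) ⊗ₜ[k] (1 : T) := by
    apply βinj
    rw [hγ, hβ, map_one, mul_one]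
  have hγalg : ∀ c : k, γ (algebraMap k H c) = c • ((1 : T) ⊗ₜ[k] (1 : T)) := by
    intro c
    rw [Algebra.algebraMap_eq_smul_one, map_smul, hγ1]
  -- injectivity of rTensor H β
  have hrinj : Function.Injective (LinearMap.rTensor H β) := by
    intro a b hab
    have h2 := congrArg
      (LinearMap.rTensor H (LinearEquiv.ofBijective β hβbij).symm.toLinearMap) hab
    rwa [← LinearMap.comp_apply, ← LinearMap.comp_apply, ← LinearMap.rTensor_comp,
      show (LinearEquiv.ofBijective β hβbij).symm.toLinearMap ∘ₗ β = LinearMap.id from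
        LinearMap.ext fun u => (LinearEquiv.ofBijective β hβbij).symm_apply_apply u,
      LinearMap.rTensor_id, LinearMap.id_apply, LinearMap.id_apply] at h2
  -- coassociativity of ρ, restated
  have hco : ∀ y : T,
      LinearMap.rTensor H ρ.toLinearMap (ρ y)
        = (TensorProduct.assoc k T H H).symm
            (LinearMap.lTensor T (Coalgebra.comul (R := k)) (ρ y)) := by
    intro y
    exact hcoassoc y
  -- colinearity of γ  (identity (v))
  have h5b : ∀ (x : T) (w : T ⊗[k] H),
      LinearMap.rTensor H β ((TensorProduct.assoc k T T H).symm (x ⊗ₜ[k] w))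
        = LinearMap.rTensor H (β ∘ₗ TensorProduct.mk k T T x) w := by
    intro x w
    induction w using TensorProduct.induction_on with
    | zero => simp only [tmul_zero, zero_tmul, map_zero, mul_zero, zero_mul, smul_zero]
    | tmul t a => simp [TensorProduct.assoc_symm_tmul]
    | add u v hu hv => simp only [tmul_add, map_add, hu, hv]
  have hβmk : ∀ x : T, (β ∘ₗ TensorProduct.mk k T T x)
      = LinearMap.mulLeft k (x ⊗ₜ[k] (1 : H)) ∘ₗ ρ.toLinearMap := by
    intro x
    apply LinearMap.ext; intro t
    simp [hβ]
  have h5z : ∀ (x t : T) (z : H ⊗[k] H),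
      (TensorProduct.assoc k T H H).symm ((x * t) ⊗ₜ[k] z)
        = LinearMap.rTensor H (LinearMap.mulLeft k (x ⊗ₜ[k] (1 : H)))
            ((TensorProduct.assoc k T H H).symm (t ⊗ₜ[k] z)) := by
    intro x t z
    induction z using TensorProduct.induction_on with
    | zero => simp only [tmul_zero, zero_tmul, map_zero, mul_zero, zero_mul, smul_zero]
    | tmul a b => simp [TensorProduct.assoc_symm_tmul, Algebra.TensorProduct.tmul_mul_tmul]
    | add u v hu hv => simp only [tmul_add, map_add, hu, hv]
  have h5c : ∀ (x : T) (w : T ⊗[k] H),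
      (TensorProduct.assoc k T H H).symm
          (LinearMap.lTensor T (Coalgebra.comul (R := k)) ((x ⊗ₜ[k] (1 : H)) * w))
        = LinearMap.rTensor H (LinearMap.mulLeft k (x ⊗ₜ[k] (1 : H)))
            ((TensorProduct.assoc k T H H).symm
              (LinearMap.lTensor T (Coalgebra.comul (R := k)) w)) := by
    intro x w
    induction w using TensorProduct.induction_on with
    | zero => simp only [tmul_zero, zero_tmul, map_zero, mul_zero, zero_mul, smul_zero]
    | tmul t a =>
        rw [Algebra.TensorProduct.tmul_mul_tmul, one_mul, LinearMap.lTensor_tmul,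
          LinearMap.lTensor_tmul]
        exact h5z x t (Coalgebra.comul a)
    | add u v hu hv => simp only [mul_add, map_add, hu, hv]
  have h5R : ∀ z : H ⊗[k] H,
      LinearMap.rTensor H ((TensorProduct.mk k T H) 1) z
        = (TensorProduct.assoc k T H H).symm ((1 : T) ⊗ₜ[k] z) := by
    intro z
    induction z using TensorProduct.induction_on with
    | zero => simp only [tmul_zero, zero_tmul, map_zero, mul_zero, zero_mul, smul_zero]
    | tmul a b => simp [TensorProduct.assoc_symm_tmul]
    | add u v hu hv => simp only [tmul_add, map_add, hu, hv]
  have h5 : ∀ h : H,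
      LinearMap.lTensor T ρ.toLinearMap (γ h)
        = TensorProduct.assoc k T T H (LinearMap.rTensor H γ (Coalgebra.comul h)) := by
    intro h
    have L : ∀ u : T ⊗[k] T,
        LinearMap.rTensor H β ((TensorProduct.assoc k T T H).symm
            (LinearMap.lTensor T ρ.toLinearMap u))
          = (TensorProduct.assoc k T H H).symm
              (LinearMap.lTensor T (Coalgebra.comul (R := k)) (β u)) := by
      intro u
      induction u using TensorProduct.induction_on with
      | zero => simp only [tmul_zero, zero_tmul, map_zero, mul_zero, zero_mul, smul_zero]
      | tmul x y =>
          rw [LinearMap.lTensor_tmul, AlgHom.toLinearMap_apply, h5b, hβmk,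
            LinearMap.rTensor_comp, LinearMap.comp_apply, hco, hβ, h5c]
      | add u v hu hv => simp only [map_add, hu, hv]
    have key : (TensorProduct.assoc k T T H).symm
          (LinearMap.lTensor T ρ.toLinearMap (γ h))
        = LinearMap.rTensor H γ (Coalgebra.comul h) := by
      apply hrinj
      rw [L, hγ, LinearMap.lTensor_tmul, ← LinearMap.comp_apply, ← LinearMap.rTensor_comp,
        show β ∘ₗ γ = (TensorProduct.mk k T H) 1 from LinearMap.ext hγ, h5R]
    rw [← key, LinearEquiv.apply_symm_apply]
  -- identity (iii):  t₍₀₎ t₍₁₎⁽¹⁾ ⊗ t₍₁₎⁽²⁾ = 1 ⊗ t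
  have h6a : ∀ (x : T) (u : T ⊗[k] T),
      β (LinearMap.rTensor T (LinearMap.mul' k T)
          ((TensorProduct.assoc k T T T).symm (x ⊗ₜ[k] u)))
        = (x ⊗ₜ[k] (1 : H)) * β u := by
    intro x u
    induction u using TensorProduct.induction_on with
    | zero => simp only [tmul_zero, zero_tmul, map_zero, mul_zero, zero_mul, smul_zero]
    | tmul a b =>
        rw [TensorProduct.assoc_symm_tmul, LinearMap.rTensor_tmul, LinearMap.mul'_apply,
          hβ, hβ,
          show ((x * a) ⊗ₜ[k] (1 : H)) = (x ⊗ₜ[k] (1 : H)) * (a ⊗ₜ[k] (1 : H)) by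
            rw [Algebra.TensorProduct.tmul_mul_tmul, mul_one],
          mul_assoc]
    | add u v hu hv => simp only [tmul_add, map_add, hu, hv, mul_add]
  have h6b : ∀ (w : T ⊗[k] H),
      β (LinearMap.rTensor T (LinearMap.mul' k T)
          ((TensorProduct.assoc k T T T).symm (LinearMap.lTensor T γ w))) = w := by
    intro w
    induction w using TensorProduct.induction_on with
    | zero => simp only [tmul_zero, zero_tmul, map_zero, mul_zero, zero_mul, smul_zero]
    | tmul t a =>
        rw [LinearMap.lTensor_tmul, h6a, hγ, Algebra.TensorProduct.tmul_mul_tmul,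
          mul_one, one_mul]
    | add u v hu hv => simp only [map_add, hu, hv]
  have h6 : ∀ t : T,
      LinearMap.rTensor T (LinearMap.mul' k T)
          ((TensorProduct.assoc k T T T).symm (LinearMap.lTensor T γ (ρ t)))
        = (1 : T) ⊗ₜ[k] t := by
    intro t
    apply βinj
    rw [h6b, hβ, ← Algebra.TensorProduct.one_def, one_mul]
  -- key computation (identity for `θ` composed with `γ`)
  have h7b : ∀ (x y : T) (v : T ⊗[k] T),
      LinearMap.mul' k T ((TensorProduct.comm k T T) (x ⊗ₜ[k] Xi k T (y ⊗ₜ[k] v)))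
        = LinearMap.mul' k T ((TensorProduct.comm k T T)
            (Pmap k T ((x ⊗ₜ[k] y) ⊗ₜ[k] v))) := by
    intro x y v
    induction v using TensorProduct.induction_on with
    | zero => simp only [tmul_zero, map_zero]
    | tmul c d =>
        rw [Xi_tmul, Pmap_tmul]
        simp [mul_assoc]
    | add v1 v2 hv1 hv2 => simp only [tmul_add, map_add, hv1, hv2]
  have h7e : ∀ z : (T ⊗[k] T) ⊗[k] H,
      LinearMap.mul' k T ((TensorProduct.comm k T T)
          (LinearMap.lTensor T (Phi γ (HopfAlgebra.antipode (R := k)))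
            ((TensorProduct.assoc k T T H) z)))
        = LinearMap.mul' k T ((TensorProduct.comm k T T)
            (Pmap k T (LinearMap.lTensor (T ⊗[k] T)
              (γ ∘ₗ HopfAlgebra.antipode (R := k)) z))) := by
    intro z
    induction z using TensorProduct.induction_on with
    | zero => simp only [map_zero]
    | tmul u a =>
        induction u using TensorProduct.induction_on with
        | zero => simp only [zero_tmul, map_zero]
        | tmul x y =>
            rw [TensorProduct.assoc_tmul, LinearMap.lTensor_tmul, Phi_tmul,
              LinearMap.lTensor_tmul, LinearMap.comp_apply]
            exact h7b x y (γ (HopfAlgebra.antipode (R := k) a))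
        | add u1 u2 hu1 hu2 => simp only [add_tmul, map_add, hu1, hu2]
    | add z1 z2 hz1 hz2 => simp only [map_add, hz1, hz2]
  have h7c : ∀ z : H ⊗[k] H,
      Pmap k T (LinearMap.lTensor (T ⊗[k] T) (γ ∘ₗ HopfAlgebra.antipode (R := k))
          (LinearMap.rTensor H γ z))
        = γ (LinearMap.mul' k H (LinearMap.lTensor H (HopfAlgebra.antipode (R := k)) z)) := by
    intro z
    induction z using TensorProduct.induction_on with
    | zero => simp only [map_zero]
    | tmul g a =>
        rw [LinearMap.rTensor_tmul, LinearMap.lTensor_tmul, LinearMap.lTensor_tmul,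
          LinearMap.comp_apply, LinearMap.mul'_apply]
        exact (h4 g (HopfAlgebra.antipode (R := k) a)).symm
    | add z1 z2 hz1 hz2 => simp only [map_add, hz1, hz2]
  -- identity (C):  θ(h⁽²⁾)·h⁽¹⁾ = ε(h)·1
  have h7 : ∀ h : H,
      LinearMap.mul' k T ((TensorProduct.comm k T T) (LinearMap.lTensor T θ (γ h)))
        = algebraMap k T (Coalgebra.counit (R := k) h) := by
    intro h
    have e1 : LinearMap.lTensor T θ (γ h)
        = LinearMap.lTensor T (Phi γ (HopfAlgebra.antipode (R := k)))
            (TensorProduct.assoc k T T H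
              (LinearMap.rTensor H γ (Coalgebra.comul h))) := by
      rw [hθ', LinearMap.lTensor_comp, LinearMap.comp_apply, h5]
    rw [e1, h7e, h7c, HopfAlgebra.mul_antipode_lTensor_comul_apply, hγalg]
    simp [Algebra.algebraMap_eq_smul_one]
  -- the convolution argument in T ⊗ Tᵐᵒᵖ
  set jE : (T ⊗[k] T) ≃ₗ[k] T ⊗[k] Tᵐᵒᵖ :=
    TensorProduct.congr (LinearEquiv.refl k T) (MulOpposite.opLinearEquiv k) with hjEdef
  have hjE_tmul : ∀ (x y : T), jE (x ⊗ₜ[k] y) = x ⊗ₜ[k] MulOpposite.op y := by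
    intro x y
    rw [hjEdef]
    simp [TensorProduct.congr_tmul]
  set Q : H →ₗ[k] T ⊗[k] Tᵐᵒᵖ :=
    jE.toLinearMap ∘ₗ (TensorProduct.comm k T T).toLinearMap ∘ₗ γ with hQdef
  set F : H →ₗ[k] T ⊗[k] Tᵐᵒᵖ :=
    jE.toLinearMap ∘ₗ LinearMap.lTensor T θ ∘ₗ γ with hFdef
  have hQapp : ∀ h' : H, Q h' = jE ((TensorProduct.comm k T T) (γ h')) := by
    intro h'; rw [hQdef]; rfl
  have hjP : ∀ u v : T ⊗[k] T,
      jE ((TensorProduct.comm k T T) (Pmap k T (u ⊗ₜ[k] v)))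
        = jE ((TensorProduct.comm k T T) u) * jE ((TensorProduct.comm k T T) v) := by
    intro u v
    induction u using TensorProduct.induction_on with
    | zero => simp only [zero_tmul, map_zero, zero_mul]
    | tmul x y =>
        induction v using TensorProduct.induction_on with
        | zero => simp only [tmul_zero, map_zero, mul_zero]
        | tmul c d =>
            rw [Pmap_tmul]
            simp [hjE_tmul, Algebra.TensorProduct.tmul_mul_tmul, MulOpposite.op_mul]
        | add v1 v2 hv1 hv2 => simp only [tmul_add, map_add, hv1, hv2, mul_add]
    | add u1 u2 hu1 hu2 => simp only [add_tmul, map_add, hu1, hu2, add_mul]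
  have hQmul : ∀ z : H ⊗[k] H,
      LinearMap.mul' k (T ⊗[k] Tᵐᵒᵖ) (TensorProduct.map Q Q z)
        = Q (LinearMap.mul' k H z) := by
    intro z
    induction z using TensorProduct.induction_on with
    | zero => simp only [map_zero]
    | tmul g a =>
        simp only [TensorProduct.map_tmul, LinearMap.mul'_apply]
        rw [hQapp, hQapp, hQapp, h4, hjP]
    | add z1 z2 hz1 hz2 => simp only [map_add, hz1, hz2]
  have hQalg : ∀ c : k, Q (algebraMap k H c) = algebraMap k (T ⊗[k] Tᵐᵒᵖ) c := by
    intro c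
    rw [hQapp, hγalg]
    simp only [map_smul, TensorProduct.comm_tmul, hjE_tmul, MulOpposite.op_one]
    rw [Algebra.algebraMap_eq_smul_one, Algebra.TensorProduct.one_def]
  have hGQ : myconv (Q ∘ₗ HopfAlgebra.antipode (R := k)) Q
      = (Algebra.linearMap k (T ⊗[k] Tᵐᵒᵖ)) ∘ₗ Coalgebra.counit := by
    apply LinearMap.ext; intro h
    have s : ∀ z : H ⊗[k] H,
        LinearMap.mul' k (T ⊗[k] Tᵐᵒᵖ)
            (TensorProduct.map (Q ∘ₗ HopfAlgebra.antipode (R := k)) Q z)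
          = Q (LinearMap.mul' k H
              (LinearMap.rTensor H (HopfAlgebra.antipode (R := k)) z)) := by
      intro z
      induction z using TensorProduct.induction_on with
      | zero => simp only [map_zero]
      | tmul g a =>
          have h2 := hQmul ((HopfAlgebra.antipode (R := k) g) ⊗ₜ[k] a)
          simp only [TensorProduct.map_tmul, LinearMap.mul'_apply] at h2
          simp only [TensorProduct.map_tmul, LinearMap.mul'_apply, LinearMap.comp_apply,
            LinearMap.rTensor_tmul]
          exact h2
      | add z1 z2 hz1 hz2 => simp only [map_add, hz1, hz2]
    rw [myconv_apply, s, HopfAlgebra.mul_antipode_rTensor_comul_apply, hQalg]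
    simp
  -- the crucial computation:  Q ⋆ F = unit
  have s2b : ∀ (x t : T) (v : T ⊗[k] T),
      (t ⊗ₜ[k] MulOpposite.op x) * jE (LinearMap.lTensor T θ v)
        = LinearMap.lTensor T
            (LinearMap.mulLeft k (MulOpposite.op x)
              ∘ₗ (MulOpposite.opLinearEquiv k : T ≃ₗ[k] Tᵐᵒᵖ).toLinearMap ∘ₗ θ)
            (LinearMap.rTensor T (LinearMap.mul' k T)
              ((TensorProduct.assoc k T T T).symm (t ⊗ₜ[k] v))) := by
    intro x t v
    induction v using TensorProduct.induction_on with
    | zero => simp only [tmul_zero, map_zero, mul_zero]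
    | tmul c d =>
        rw [TensorProduct.assoc_symm_tmul, LinearMap.lTensor_tmul, LinearMap.rTensor_tmul,
          LinearMap.lTensor_tmul, LinearMap.mul'_apply, hjE_tmul]
        simp [Algebra.TensorProduct.tmul_mul_tmul]
    | add v1 v2 hv1 hv2 => simp only [tmul_add, map_add, hv1, hv2, mul_add]
  have s2a : ∀ (x : T) (w : T ⊗[k] H),
      LinearMap.mul' k (T ⊗[k] Tᵐᵒᵖ)
          (TensorProduct.map (jE.toLinearMap ∘ₗ (TensorProduct.comm k T T).toLinearMap)
            (jE.toLinearMap ∘ₗ LinearMap.lTensor T θ)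
            (LinearMap.lTensor (T ⊗[k] T) γ
              ((TensorProduct.assoc k T T H).symm (x ⊗ₜ[k] w))))
        = LinearMap.lTensor T
            (LinearMap.mulLeft k (MulOpposite.op x)
              ∘ₗ (MulOpposite.opLinearEquiv k : T ≃ₗ[k] Tᵐᵒᵖ).toLinearMap ∘ₗ θ)
            (LinearMap.rTensor T (LinearMap.mul' k T)
              ((TensorProduct.assoc k T T T).symm (LinearMap.lTensor T γ w))) := by
    intro x w
    induction w using TensorProduct.induction_on with
    | zero => simp only [tmul_zero, map_zero]
    | tmul t a =>
        rw [TensorProduct.assoc_symm_tmul, LinearMap.lTensor_tmul, LinearMap.lTensor_tmul,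
          TensorProduct.map_tmul, LinearMap.mul'_apply, LinearMap.comp_apply,
          LinearMap.comp_apply, LinearEquiv.coe_coe, LinearEquiv.coe_coe,
          TensorProduct.comm_tmul, hjE_tmul]
        exact s2b x t (γ a)
    | add w1 w2 hw1 hw2 => simp only [tmul_add, map_add, hw1, hw2]
  have s2 : ∀ u : T ⊗[k] T,
      LinearMap.mul' k (T ⊗[k] Tᵐᵒᵖ)
          (TensorProduct.map (jE.toLinearMap ∘ₗ (TensorProduct.comm k T T).toLinearMap)
            (jE.toLinearMap ∘ₗ LinearMap.lTensor T θ)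
            (LinearMap.lTensor (T ⊗[k] T) γ
              ((TensorProduct.assoc k T T H).symm (LinearMap.lTensor T ρ.toLinearMap u))))
        = (1 : T) ⊗ₜ[k] MulOpposite.op
            (LinearMap.mul' k T ((TensorProduct.comm k T T) (LinearMap.lTensor T θ u))) := by
    intro u
    induction u using TensorProduct.induction_on with
    | zero => simp only [map_zero, MulOpposite.op_zero, tmul_zero]
    | tmul x y =>
        rw [LinearMap.lTensor_tmul, AlgHom.toLinearMap_apply, s2a, h6,
          LinearMap.lTensor_tmul, LinearMap.lTensor_tmul]
        simp [MulOpposite.op_mul]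
    | add u1 u2 hu1 hu2 =>
        simp only [map_add, hu1, hu2, MulOpposite.op_add, tmul_add]
  have hQFs1 : ∀ z : H ⊗[k] H,
      LinearMap.mul' k (T ⊗[k] Tᵐᵒᵖ) (TensorProduct.map Q F z)
        = LinearMap.mul' k (T ⊗[k] Tᵐᵒᵖ)
            (TensorProduct.map (jE.toLinearMap ∘ₗ (TensorProduct.comm k T T).toLinearMap)
              (jE.toLinearMap ∘ₗ LinearMap.lTensor T θ)
              (LinearMap.lTensor (T ⊗[k] T) γ (LinearMap.rTensor H γ z))) := by
    intro z
    induction z using TensorProduct.induction_on with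
    | zero => simp only [map_zero]
    | tmul g a =>
        rw [LinearMap.rTensor_tmul, LinearMap.lTensor_tmul]
        simp only [TensorProduct.map_tmul, hQdef, hFdef, LinearMap.comp_apply,
          LinearEquiv.coe_coe]
    | add z1 z2 hz1 hz2 => simp only [map_add, hz1, hz2]
  have hQF : myconv Q F = (Algebra.linearMap k (T ⊗[k] Tᵐᵒᵖ)) ∘ₗ Coalgebra.counit := by
    apply LinearMap.ext; intro h
    have e2 : LinearMap.rTensor H γ (Coalgebra.comul h)
        = (TensorProduct.assoc k T T H).symm
            (LinearMap.lTensor T ρ.toLinearMap (γ h)) := by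
      rw [h5 h, LinearEquiv.symm_apply_apply]
    rw [myconv_apply, hQFs1, e2, s2, h7]
    simp only [LinearMap.comp_apply, Algebra.linearMap_apply]
    rw [Algebra.algebraMap_eq_smul_one, Algebra.algebraMap_eq_smul_one,
      MulOpposite.op_smul, MulOpposite.op_one, tmul_smul, Algebra.TensorProduct.one_def]
  -- conclude by uniqueness of convolution inverses
  have hFG : F = Q ∘ₗ HopfAlgebra.antipode (R := k) := by
    calc F = myconv ((Algebra.linearMap k (T ⊗[k] Tᵐᵒᵖ)) ∘ₗ Coalgebra.counit) F :=
          (myconv_unit_left F).symm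
    _ = myconv (myconv (Q ∘ₗ HopfAlgebra.antipode (R := k)) Q) F := by rw [hGQ]
    _ = myconv (Q ∘ₗ HopfAlgebra.antipode (R := k)) (myconv Q F) := myconv_assoc _ _ _
    _ = myconv (Q ∘ₗ HopfAlgebra.antipode (R := k))
          ((Algebra.linearMap k (T ⊗[k] Tᵐᵒᵖ)) ∘ₗ Coalgebra.counit) := by rw [hQF]
    _ = Q ∘ₗ HopfAlgebra.antipode (R := k) := myconv_unit_right _
  intro h
  have hfh := LinearMap.congr_fun hFG h
  apply jE.injective
  simp only [hFdef, hQdef, LinearMap.comp_apply, LinearEquiv.coe_coe] at hfh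
  exact hfh
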